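/- Orthogonality of invariant vectors for different speeds (Lemma 4.2). Assume Hypothesis (SL). Fix n ∈ ℤ^D with n ≠ 0 and let v, w ∈ ℝ \ {0} with v ≠ w. If Ψ ∈ H satisfies U(n, ‖n‖₁/v)Ψ = Ψ and ⟨Ω, Ψ⟩ = 0, and Ψ' ∈ H satisfies U(n, ‖n‖₁/w)Ψ' = Ψ' and ⟨Ω, Ψ'⟩ = 0, then ⟨Ψ, Ψ'⟩ = 0. -/

import Mathlib

open Filter MeasureTheory Topology

noncomputable def l1 {D : ℕ} (n : Fin D → ℤ) : ℝ := ∑ i, |(n i : ℝ)|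

variable {D : ℕ} {H : Type*} [NormedAddCommGroup H] [InnerProductSpace ℂ H]
  [CompleteSpace H] [TopologicalSpace.SeparableSpace H]

lemma l1_pos' {D : ℕ} {n : Fin D → ℤ} (hn : n ≠ 0) : 0 < l1 n := by
  obtain ⟨i, hi⟩ : ∃ i, n i ≠ 0 := by
    by_contra h; push_neg at h; exact hn (funext h)
  refine Finset.sum_pos' (fun j _ => abs_nonneg _) ⟨i, Finset.mem_univ i, ?_⟩
  exact abs_pos.mpr (Int.cast_ne_zero.mpr hi)

lemma l1_zsmul' {D : ℕ} (k : ℤ) (n : Fin D → ℤ) : l1 (k • n) = |(k:ℝ)| * l1 n := by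
  unfold l1
  rw [Finset.mul_sum]
  refine Finset.sum_congr rfl fun i _ => ?_
  rw [Pi.smul_apply, smul_eq_mul]
  push_cast
  rw [abs_mul]

lemma exists_good_pair (vc v w : ℝ) (hvc : 0 < vc) (hv : v ≠ 0) (hw : w ≠ 0)
    (hvw : v ≠ w) : ∃ a b : ℤ, b ≠ a ∧ vc * |(b:ℝ)/w - (a:ℝ)/v| < |(b:ℝ) - (a:ℝ)| := by
  have hv' : (0:ℝ) < |v| := abs_pos.mpr hv
  set δ : ℝ := |1 - v / w| with hδdef
  have hδ : 0 < δ := by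
    rw [hδdef]
    refine abs_pos.mpr (sub_ne_zero.mpr ?_)
    intro h
    exact hvw (by field_simp at h; linarith)
  set C : ℝ := vc / (2 * |v|) + 1 with hCdef
  have hC0 : 0 < vc / (2 * |v|) := by positivity
  set N : ℕ := ⌈C / δ⌉₊ with hNdef
  have hNδ : C ≤ (N : ℝ) * δ := by
    have h1 : C / δ ≤ (N : ℝ) := Nat.le_ceil _
    calc C = C / δ * δ := by field_simp
    _ ≤ (N : ℝ) * δ := by nlinarith
  set a : ℤ := round ((N : ℝ) * (v / w)) with hadef
  have hra : |(N : ℝ) * (v / w) - (a : ℝ)| ≤ 1 / 2 := abs_sub_round _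
  set b : ℤ := (N : ℤ) with hbdef
  have hb : (b : ℝ) = (N : ℝ) := by exact_mod_cast rfl
  clear_value δ C N a b
  have hba : vc / (2 * |v|) + 1 / 2 ≤ |(b : ℝ) - (a : ℝ)| := by
    have h1 : |(N : ℝ) - (N : ℝ) * (v / w)| = (N : ℝ) * δ := by
      rw [show (N:ℝ) - (N:ℝ)*(v/w) = (N:ℝ) * (1 - v/w) by ring, abs_mul,
        abs_of_nonneg (Nat.cast_nonneg N : (0:ℝ) ≤ N), ← hδdef]
    have h2 : |(N:ℝ) - (N:ℝ)*(v/w)| ≤ |(N:ℝ) - (a:ℝ)| + |(N:ℝ)*(v/w) - (a:ℝ)| := by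
      calc |(N:ℝ) - (N:ℝ)*(v/w)| = |((N:ℝ) - (a:ℝ)) + ((a:ℝ) - (N:ℝ)*(v/w))| :=
            congrArg abs (by ring)
      _ ≤ |(N:ℝ) - (a:ℝ)| + |(a:ℝ) - (N:ℝ)*(v/w)| := abs_add_le _ _
      _ = |(N:ℝ) - (a:ℝ)| + |(N:ℝ)*(v/w) - (a:ℝ)| := by rw [abs_sub_comm ((a:ℝ)) _]
    rw [hb]
    have h3 : (N:ℝ) * δ ≤ |(N:ℝ) - (a:ℝ)| + 1/2 := by rw [← h1]; linarith
    calc vc / (2 * |v|) + 1/2 = C - 1/2 := by rw [hCdef]; ring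
    _ ≤ (N:ℝ) * δ - 1/2 := by linarith [hNδ]
    _ ≤ |(N:ℝ) - (a:ℝ)| := by linarith [h3]
  refine ⟨a, b, ?_, ?_⟩
  · intro h
    rw [h, sub_self, abs_zero] at hba
    linarith
  · have hkey : |(b:ℝ)/w - (a:ℝ)/v| ≤ 1 / (2 * |v|) := by
      have : (b:ℝ)/w - (a:ℝ)/v = ((b:ℝ)*(v/w) - (a:ℝ)) / v := by field_simp
      rw [this, abs_div, hb]
      rw [div_le_div_iff₀ (abs_pos.mpr hv) (by positivity)]
      calc |(N:ℝ)*(v/w) - (a:ℝ)| * (2*|v|) ≤ (1/2) * (2*|v|) := by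
            apply mul_le_mul_of_nonneg_right hra (by positivity)
      _ = 1 * |v| := by ring
    calc vc * |(b:ℝ)/w - (a:ℝ)/v| ≤ vc * (1/(2*|v|)) :=
          mul_le_mul_of_nonneg_left hkey (le_of_lt hvc)
    _ = vc / (2*|v|) := by ring
    _ < vc / (2*|v|) + 1/2 := by linarith
    _ ≤ |(b:ℝ) - (a:ℝ)| := hba

/-- **Orthogonality of invariant vectors for different speeds** (Lemma 4.2). -/
theorem invariant_vectors_orthogonal
    (U : (Fin D → ℤ) × ℝ → H ≃ₗᵢ[ℂ] H)
    (hU0 : U 0 = LinearIsometryEquiv.refl ℂ H)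
    (hUadd : ∀ p q : (Fin D → ℤ) × ℝ, U (p + q) = (U q).trans (U p))
    (Ω : H) (hΩ : ‖Ω‖ = 1) (hΩinv : ∀ p, U p Ω = Ω)
    (vc : ℝ) (hvc : 0 < vc)
    (hSL : ∀ (m : Fin D → ℤ) (t : ℝ), m ≠ 0 → vc * |t| < l1 m →
      ∀ ψ : H, U (m, t) ψ = ψ → ∃ c : ℂ, ψ = c • Ω)
    (n : Fin D → ℤ) (hn : n ≠ 0) (v w : ℝ) (hv : v ≠ 0) (hw : w ≠ 0) (hvw : v ≠ w)
    (Ψ Ψ' : H)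
    (hΨ : U (n, l1 n / v) Ψ = Ψ) (hΨΩ : (inner ℂ Ω Ψ : ℂ) = 0)
    (hΨ' : U (n, l1 n / w) Ψ' = Ψ') (hΨ'Ω : (inner ℂ Ω Ψ' : ℂ) = 0) :
    (inner ℂ Ψ Ψ' : ℂ) = 0 := by
  -- basic consequences of the group law
  have key1 : ∀ (p : (Fin D → ℤ) × ℝ) (ψ : H), U p (U (-p) ψ) = ψ := by
    intro p ψ
    have h := hUadd p (-p)
    rw [add_neg_cancel, hU0] at h
    have := congrArg (fun e : H ≃ₗᵢ[ℂ] H => e ψ) h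
    simpa using this.symm
  have key1' : ∀ (p : (Fin D → ℤ) × ℝ) (ψ : H), U (-p) (U p ψ) = ψ := by
    intro p ψ; simpa using key1 (-p) ψ
  have happ : ∀ (p q : (Fin D → ℤ) × ℝ) (ψ : H), U (p + q) ψ = U p (U q ψ) := by
    intro p q ψ
    have := congrArg (fun e : H ≃ₗᵢ[ℂ] H => e ψ) (hUadd p q)
    simpa using this
  have hcomm : ∀ (p q : (Fin D → ℤ) × ℝ) (ψ : H), U p (U q ψ) = U q (U p ψ) := by
    intro p q ψ
    rw [← happ, ← happ, add_comm]
  have hfixN : ∀ (p : (Fin D → ℤ) × ℝ) (ψ : H), U p ψ = ψ → ∀ k : ℕ,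
      U ((k : ℤ) • p) ψ = ψ := by
    intro p ψ hψ k
    induction k with
    | zero => simp [hU0]
    | succ k ih =>
      have h : ((k + 1 : ℕ) : ℤ) • p = p + (k : ℤ) • p := by
        push_cast; rw [add_smul, one_smul, add_comm]
      rw [h, happ, ih, hψ]
  have hfix : ∀ (p : (Fin D → ℤ) × ℝ) (ψ : H), U p ψ = ψ → ∀ k : ℤ,
      U (k • p) ψ = ψ := by
    intro p ψ hψ k
    obtain ⟨m, hm | hm⟩ := Int.eq_nat_or_neg k
    · rw [hm]; exact hfixN p ψ hψ m
    · rw [hm, neg_smul]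
      conv_lhs => rw [← hfixN p ψ hψ m]
      exact key1' _ _
  -- choose the good pair of integers
  obtain ⟨a, b, hbne, hgood⟩ := exists_good_pair vc v w hvc hv hw hvw
  set p₁ : (Fin D → ℤ) × ℝ := (n, l1 n / v) with hp₁
  set p₂ : (Fin D → ℤ) × ℝ := (n, l1 n / w) with hp₂
  set q : (Fin D → ℤ) × ℝ := -(a • p₁) + b • p₂ with hqdef
  have hln : 0 < l1 n := l1_pos' hn
  -- components of q
  have hq1 : q.1 = (b - a) • n := by
    rw [hqdef]
    show -(a • n) + b • n = (b - a) • n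
    rw [sub_smul]; abel
  have hq2 : q.2 = l1 n * ((b:ℝ)/w - (a:ℝ)/v) := by
    rw [hqdef]
    show -(a • (l1 n / v)) + b • (l1 n / w) = l1 n * ((b:ℝ)/w - (a:ℝ)/v)
    rw [zsmul_eq_mul, zsmul_eq_mul]
    field_simp
    ring
  have hq1ne : q.1 ≠ 0 := by
    rw [hq1]
    intro h
    apply hn
    have hba' : (b - a : ℤ) ≠ 0 := sub_ne_zero.mpr hbne
    funext i
    have := congrFun h i
    rw [Pi.smul_apply, smul_eq_mul] at this
    simpa [hba'] using mul_eq_zero.mp this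
  have hqsl : vc * |q.2| < l1 q.1 := by
    rw [hq1, hq2, l1_zsmul', abs_mul, abs_of_pos hln]
    have hcast : |((b - a : ℤ) : ℝ)| = |(b:ℝ) - (a:ℝ)| := by push_cast; rfl
    rw [hcast]
    calc vc * (l1 n * |(b:ℝ)/w - (a:ℝ)/v|) = l1 n * (vc * |(b:ℝ)/w - (a:ℝ)/v|) := by ring
    _ < l1 n * |(b:ℝ) - (a:ℝ)| := by
        exact mul_lt_mul_of_pos_left hgood hln
    _ = |(b:ℝ) - (a:ℝ)| * l1 n := by ring
  -- invariance of the inner product with Ψ under U q, for p₂-invariant vectors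
  have inv : ∀ φ : H, U p₂ φ = φ → (inner ℂ Ψ (U q φ) : ℂ) = inner ℂ Ψ φ := by
    intro φ hφ
    have e1 : U q φ = U (-(a • p₁)) φ := by
      rw [hqdef, happ, hfix p₂ φ hφ b]
    rw [e1]
    calc (inner ℂ Ψ (U (-(a • p₁)) φ) : ℂ)
        = inner ℂ (U (a • p₁) Ψ) (U (a • p₁) (U (-(a • p₁)) φ)) :=
          ((U (a • p₁)).inner_map_map _ _).symm
    _ = inner ℂ Ψ φ := by rw [key1, hfix p₁ Ψ hΨ a]
  -- iterates
  have fixq : ∀ k : ℤ, U p₂ (U (k • q) Ψ') = U (k • q) Ψ' := by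
    intro k
    rw [hcomm, hΨ']
  have innk : ∀ k : ℕ, (inner ℂ Ψ (U ((k : ℤ) • q) Ψ') : ℂ) = inner ℂ Ψ Ψ' := by
    intro k
    induction k with
    | zero => simp [hU0]
    | succ k ih =>
      have h : ((k + 1 : ℕ) : ℤ) • q = q + (k : ℤ) • q := by
        push_cast; rw [add_smul, one_smul, add_comm]
      rw [h, happ, inv _ (fixq (k : ℤ)), ih]
  -- the range submodule
  set f : H →ₗ[ℂ] H := (U q).toLinearEquiv.toLinearMap - LinearMap.id with hfdef
  have hfapp : ∀ ξ : H, f ξ = U q ξ - ξ := fun ξ => rfl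
  set K : Submodule ℂ H := LinearMap.range f with hKdef
  have hKperp : ∀ ψ : H, ψ ∈ Kᗮ → ∃ c : ℂ, ψ = c • Ω := by
    intro ψ hψmem
    have h0 : ∀ ξ : H, (inner ℂ (U q ξ - ξ) ψ : ℂ) = 0 := by
      intro ξ
      have := hψmem (f ξ) (LinearMap.mem_range_self f ξ)
      rwa [hfapp] at this
    have hfixψ : U q ψ = ψ := by
      have h1 : ∀ ξ : H, (inner ℂ (U q ξ) (U q ψ - ψ) : ℂ) = 0 := by
        intro ξ
        have h2 := h0 ξ
        rw [inner_sub_left] at h2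
        rw [inner_sub_right, (U q).inner_map_map]
        linear_combination -h2
      have h3 := h1 ((U q).symm (U q ψ - ψ))
      rw [(U q).apply_symm_apply] at h3
      rw [← sub_eq_zero]
      exact inner_self_eq_zero.mp h3
    exact hSL q.1 q.2 hq1ne hqsl ψ hfixψ
  have hmemcl : Ψ' ∈ K.topologicalClosure := by
    rw [← Submodule.orthogonal_orthogonal_eq_closure]
    rw [Submodule.mem_orthogonal]
    intro u hu
    obtain ⟨c, rfl⟩ := hKperp u hu
    rw [inner_smul_left, hΨ'Ω, mul_zero]
  have hmemcl' : Ψ' ∈ closure (K : Set H) := by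
    rw [← Submodule.topologicalClosure_coe]
    exact hmemcl
  -- the main estimate
  have main : ∀ ε : ℝ, 0 < ε → ‖(inner ℂ Ψ Ψ' : ℂ)‖ ≤ ε := by
    intro ε hε
    set ε₁ : ℝ := ε / (2 * (‖Ψ‖ + 1)) with hε₁def
    have hε₁ : 0 < ε₁ := by positivity
    obtain ⟨η, hηK, hηdist⟩ := Metric.mem_closure_iff.mp hmemcl' ε₁ hε₁
    obtain ⟨ξ, hξ⟩ := LinearMap.mem_range.mp hηK
    rw [hfapp] at hξ
    have hdist : ‖Ψ' - η‖ < ε₁ := by rwa [← dist_eq_norm]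
    obtain ⟨N, hN⟩ := exists_nat_gt (2 * ‖Ψ‖ * ‖ξ‖ / (ε / 2))
    have hN0 : 0 < (N : ℝ) := lt_of_le_of_lt (by positivity) hN
    -- decompose the sum
    have hterm : ∀ k : ℕ, U ((k : ℤ) • q) Ψ' =
        (U (((k + 1 : ℕ) : ℤ) • q) ξ - U ((k : ℤ) • q) ξ) + U ((k : ℤ) • q) (Ψ' - η) := by
      intro k
      have h1 : U ((k : ℤ) • q) η = U (((k + 1 : ℕ) : ℤ) • q) ξ - U ((k : ℤ) • q) ξ := by
        rw [← hξ, map_sub]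
        congr 1
        rw [← happ]
        congr 1
        push_cast
        rw [add_smul, one_smul, add_comm]
      rw [map_sub, h1]
      abel
    have hsum : ∑ k ∈ Finset.range N, U ((k : ℤ) • q) Ψ' =
        (U ((N : ℤ) • q) ξ - ξ) + ∑ k ∈ Finset.range N, U ((k : ℤ) • q) (Ψ' - η) := by
      rw [Finset.sum_congr rfl (fun k _ => hterm k), Finset.sum_add_distrib]
      congr 1
      rw [Finset.sum_range_sub (fun k : ℕ => U ((k : ℤ) • q) ξ)]
      simp [hU0]
    have hsum_inner : (N : ℂ) * inner ℂ Ψ Ψ' = inner ℂ Ψ (∑ k ∈ Finset.range N, U ((k : ℤ) • q) Ψ') := by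
      rw [inner_sum]
      rw [Finset.sum_congr rfl (fun k _ => innk k)]
      rw [Finset.sum_const, Finset.card_range, nsmul_eq_mul]
    -- estimate
    have hXnorm : ‖U ((N : ℤ) • q) ξ - ξ‖ ≤ 2 * ‖ξ‖ := by
      calc ‖U ((N : ℤ) • q) ξ - ξ‖ ≤ ‖U ((N : ℤ) • q) ξ‖ + ‖ξ‖ := norm_sub_le _ _
      _ = ‖ξ‖ + ‖ξ‖ := by rw [(U _).norm_map]
      _ = 2 * ‖ξ‖ := by ring
    have hYnorm : ‖∑ k ∈ Finset.range N, U ((k : ℤ) • q) (Ψ' - η)‖ ≤ N * ε₁ := by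
      calc ‖∑ k ∈ Finset.range N, U ((k : ℤ) • q) (Ψ' - η)‖
          ≤ ∑ k ∈ Finset.range N, ‖U ((k : ℤ) • q) (Ψ' - η)‖ := norm_sum_le _ _
      _ = ∑ _k ∈ Finset.range N, ‖Ψ' - η‖ := by
          refine Finset.sum_congr rfl fun k _ => (U _).norm_map _
      _ = N * ‖Ψ' - η‖ := by rw [Finset.sum_const, Finset.card_range, nsmul_eq_mul]
      _ ≤ N * ε₁ := by
          apply mul_le_mul_of_nonneg_left (le_of_lt hdist) (Nat.cast_nonneg N)
    have hNineq : (N : ℝ) * ‖(inner ℂ Ψ Ψ' : ℂ)‖ ≤ ‖Ψ‖ * (2 * ‖ξ‖ + N * ε₁) := by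
      calc (N : ℝ) * ‖(inner ℂ Ψ Ψ' : ℂ)‖ = ‖(N : ℂ) * inner ℂ Ψ Ψ'‖ := by
            rw [norm_mul]
            norm_num
      _ = ‖(inner ℂ Ψ (∑ k ∈ Finset.range N, U ((k : ℤ) • q) Ψ') : ℂ)‖ := by rw [hsum_inner]
      _ ≤ ‖Ψ‖ * ‖∑ k ∈ Finset.range N, U ((k : ℤ) • q) Ψ'‖ := norm_inner_le_norm _ _
      _ ≤ ‖Ψ‖ * (2 * ‖ξ‖ + N * ε₁) := by
          apply mul_le_mul_of_nonneg_left _ (norm_nonneg Ψ)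
          rw [hsum]
          calc ‖(U ((N : ℤ) • q) ξ - ξ) + ∑ k ∈ Finset.range N, U ((k : ℤ) • q) (Ψ' - η)‖
              ≤ ‖U ((N : ℤ) • q) ξ - ξ‖ + ‖∑ k ∈ Finset.range N, U ((k : ℤ) • q) (Ψ' - η)‖ :=
                norm_add_le _ _
          _ ≤ 2 * ‖ξ‖ + N * ε₁ := add_le_add hXnorm hYnorm
    have h1' : ‖(inner ℂ Ψ Ψ' : ℂ)‖ ≤ ‖Ψ‖ * (2 * ‖ξ‖ + N * ε₁) / N := by
      rw [le_div_iff₀ hN0, mul_comm]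
      exact hNineq
    have heq : ‖Ψ‖ * (2 * ‖ξ‖ + N * ε₁) / N = 2 * ‖Ψ‖ * ‖ξ‖ / N + ‖Ψ‖ * ε₁ := by
      field_simp
    have h1 : ‖(inner ℂ Ψ Ψ' : ℂ)‖ ≤ 2 * ‖Ψ‖ * ‖ξ‖ / N + ‖Ψ‖ * ε₁ := by
      rw [heq] at h1'
      exact h1'
    have h2 : 2 * ‖Ψ‖ * ‖ξ‖ / N ≤ ε / 2 := by
      rw [div_le_iff₀ hN0]
      have := (div_lt_iff₀ (by positivity : (0:ℝ) < ε / 2)).mp hN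
      nlinarith [hN]
    have h3 : ‖Ψ‖ * ε₁ ≤ ε / 2 := by
      have key : ‖Ψ‖ * (ε / (2 * (‖Ψ‖ + 1))) = ε * ‖Ψ‖ / (2 * (‖Ψ‖ + 1)) := by ring
      rw [hε₁def, key, div_le_div_iff₀ (by positivity) (by norm_num : (0:ℝ) < 2)]
      nlinarith [norm_nonneg Ψ, hε]
    linarith
  by_contra hne
  have hpos : 0 < ‖(inner ℂ Ψ Ψ' : ℂ)‖ := norm_pos_iff.mpr hne
  have := main (‖(inner ℂ Ψ Ψ' : ℂ)‖ / 2) (by positivity)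
  linarith
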